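/- arXiv:1812.10725 — 3 statements merged into one kernel-verified Lean document; each statement's English description precedes it below -/
import Mathlib

section
/- Let O be the ring of integers of a real quadratic field and M = {A ∈ SL₂(O) : a + d ∈ 2O and b + c ∈ 2O} where A = [[a,b],[c,d]]. The map sending (A,B,C,D) ∈ O⁴ with A² + B² = C² + D² + 1 to the matrix [[A+C, B+D],[D-B, A-C]] is a bijection from {(A,B,C,D) ∈ O⁴ : A² + B² = C² + D² + 1} onto M. -/
/-- The ring of integers of `ℚ(√D)`, realized as a subring of `ℝ`. -/
noncomputable def Oring (D : ℕ) : Subring ℝ :=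
  Subring.closure {if D % 4 = 1 then (1 + Real.sqrt D) / 2 else Real.sqrt D}

lemma Oring_two_ne_zero (D : ℕ) : (2 : Oring D) ≠ 0 := by
  intro h
  have := congrArg (Subtype.val) h
  norm_num at this

/-- The map `(A,B,C,D) ↦ [[A+C, B+D],[D-B, A-C]]` is a bijection from
`{(A,B,C,D) ∈ O⁴ : A² + B² = C² + D² + 1}` onto
`M = {γ ∈ SL₂(O) : a+d ∈ 2O, b+c ∈ 2O}`. -/
theorem bijection_onto_M (D : ℕ) (hD : 1 < D) (hsf : Squarefree D) :
    Set.BijOn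
      (fun q : Oring D × Oring D × Oring D × Oring D =>
        !![q.1 + q.2.2.1, q.2.1 + q.2.2.2; q.2.2.2 - q.2.1, q.1 - q.2.2.1])
      {q : Oring D × Oring D × Oring D × Oring D |
        q.1 ^ 2 + q.2.1 ^ 2 = q.2.2.1 ^ 2 + q.2.2.2 ^ 2 + 1}
      {A : Matrix (Fin 2) (Fin 2) (Oring D) | A.det = 1
        ∧ (2 : Oring D) ∣ (A 0 0 + A 1 1) ∧ (2 : Oring D) ∣ (A 0 1 + A 1 0)} := by
  have h2 := Oring_two_ne_zero D
  refine ⟨?_, ?_, ?_⟩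
  · rintro ⟨a, b, c, d⟩ hq
    simp only [Set.mem_setOf_eq] at hq ⊢
    refine ⟨?_, ⟨a, ?_⟩, ⟨d, ?_⟩⟩
    · rw [Matrix.det_fin_two_of]
      linear_combination hq
    · simp; ring
    · simp; ring
  · rintro ⟨a, b, c, d⟩ - ⟨a', b', c', d'⟩ - h
    simp only at h
    have h00 := congrFun (congrFun h 0) 0
    have h01 := congrFun (congrFun h 0) 1
    have h10 := congrFun (congrFun h 1) 0
    have h11 := congrFun (congrFun h 1) 1
    simp only [Matrix.cons_val', Matrix.cons_val_zero, Matrix.cons_val_one, Matrix.head_cons,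
      Matrix.empty_val', Matrix.cons_val_fin_one, Matrix.head_fin_const, Matrix.of_apply] at h00 h01 h10 h11
    have ha : a = a' := by
      have : (2 : Oring D) * a = 2 * a' := by linear_combination h00 + h11
      exact mul_left_cancel₀ h2 this
    have hc : c = c' := by
      have : (2 : Oring D) * c = 2 * c' := by linear_combination h00 - h11
      exact mul_left_cancel₀ h2 this
    have hd : d = d' := by
      have : (2 : Oring D) * d = 2 * d' := by linear_combination h01 + h10
      exact mul_left_cancel₀ h2 this
    have hb : b = b' := by
      have : (2 : Oring D) * b = 2 * b' := by linear_combination h01 - h10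
      exact mul_left_cancel₀ h2 this
    simp [ha, hb, hc, hd]
  · rintro A ⟨hdet, ⟨x, hx⟩, ⟨y, hy⟩⟩
    rw [Matrix.det_fin_two] at hdet
    refine ⟨⟨x, A 0 1 - y, x - A 1 1, y⟩, ?_, ?_⟩
    · simp only [Set.mem_setOf_eq]
      linear_combination hdet - A 1 1 * hx + A 0 1 * hy
    · simp only
      ext i j
      fin_cases i <;> fin_cases j <;>
        simp only [Matrix.cons_val', Matrix.cons_val_zero, Matrix.cons_val_one,
          Matrix.head_cons, Matrix.empty_val', Matrix.cons_val_fin_one,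
          Matrix.head_fin_const, Matrix.of_apply, Fin.mk_zero, Fin.mk_one] <;>
        first
          | exact congrArg Subtype.val (by linear_combination hx)
          | exact congrArg Subtype.val (by linear_combination -hx)
          | exact congrArg Subtype.val (by linear_combination -hy)
          | exact congrArg Subtype.val (by linear_combination hy)
          | exact congrArg Subtype.val (by ring)
          | ring
end

section
/- Let C = S·T₁ where S = [[0,1],[-1,0]] and T₁ = [[1,1],[0,1]], viewed in SL₂(O) for O the ring of integers of Q(√D) with 8 ∤ D - 5. Then the conjugate C⁻¹ Γ₀(2O) C equals the group Γ' = {A = [[a,b],[c,d]] ∈ SL₂(O) : a+d ∈ 2O, b+c ∈ 2O}, where Γ₀(2O) is the set of matrices in SL₂(O) whose lower-left entry lies in 2O. -/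
noncomputable def om (D : ℕ) : ℝ :=
  if D % 4 = 1 then (1 + Real.sqrt D) / 2 else Real.sqrt D

lemma Oring_eq (D : ℕ) : Oring D = Subring.closure {om D} := rfl

lemma om_sq (D : ℕ) : ∃ e f : ℤ, (om D) ^ 2 = (e : ℝ) + (f : ℝ) * om D := by
  by_cases h4 : D % 4 = 1
  · obtain ⟨k, hk⟩ : ∃ k : ℕ, D = 4 * k + 1 := ⟨D / 4, by omega⟩
    refine ⟨k, 1, ?_⟩
    have hs : Real.sqrt D ^ 2 = (D : ℝ) := Real.sq_sqrt (by positivity)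
    have hD : (D : ℝ) = 4 * (k : ℝ) + 1 := by exact_mod_cast congrArg (Nat.cast : ℕ → ℝ) hk
    simp only [om, if_pos h4]
    push_cast
    nlinarith [hs, hD]
  · refine ⟨D, 0, ?_⟩
    have hs : Real.sqrt D ^ 2 = (D : ℝ) := Real.sq_sqrt (by positivity)
    simp only [om, if_neg h4]
    push_cast
    linarith

lemma mem_Oring_iff (D : ℕ) (x : ℝ) :
    x ∈ Oring D ↔ ∃ m n : ℤ, x = (m : ℝ) + (n : ℝ) * om D := by
  obtain ⟨e, f, hef⟩ := om_sq D
  constructor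
  · intro hx
    rw [Oring_eq] at hx
    induction hx using Subring.closure_induction with
    | mem y hy =>
      rw [Set.mem_singleton_iff] at hy
      exact ⟨0, 1, by simp [hy]⟩
    | zero => exact ⟨0, 0, by simp⟩
    | one => exact ⟨1, 0, by simp⟩
    | add y z hy hz ihy ihz =>
      obtain ⟨m, n, rfl⟩ := ihy
      obtain ⟨p, q, rfl⟩ := ihz
      exact ⟨m + p, n + q, by push_cast; ring⟩
    | neg y hy ihy =>
      obtain ⟨m, n, rfl⟩ := ihy
      exact ⟨-m, -n, by push_cast; ring⟩
    | mul y z hy hz ihy ihz =>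
      obtain ⟨m, n, rfl⟩ := ihy
      obtain ⟨p, q, rfl⟩ := ihz
      refine ⟨m * p + n * q * e, m * q + n * p + n * q * f, ?_⟩
      push_cast
      linear_combination (n : ℝ) * q * hef
  · rintro ⟨m, n, rfl⟩
    rw [Oring_eq]
    exact add_mem (intCast_mem _ m)
      (mul_mem (intCast_mem _ n) (Subring.subset_closure rfl))

lemma irr_om (D : ℕ) (hD : 1 < D) (hsf : Squarefree D) : Irrational (om D) := by
  have hns : ¬ IsSquare D := by
    rintro ⟨r, hr⟩
    have : IsUnit r := hsf r (by rw [hr])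
    rw [Nat.isUnit_iff] at this
    subst this
    omega
  have hirr : Irrational (Real.sqrt D) := irrational_sqrt_natCast_iff.mpr hns
  unfold om
  split
  · have h1 : Irrational ((1 : ℤ) + Real.sqrt D) := hirr.intCast_add 1
    have := h1.div_intCast (m := 2) (by norm_num)
    simpa using this
  · exact hirr

lemma indep_om (D : ℕ) (hD : 1 < D) (hsf : Squarefree D) (m n : ℤ)
    (h : (m : ℝ) + (n : ℝ) * om D = 0) : m = 0 ∧ n = 0 := by
  have hirr := irr_om D hD hsf
  by_cases hn : n = 0
  · subst hn
    simp at h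
    exact ⟨by exact_mod_cast h, rfl⟩
  · exfalso
    have hom : om D = ((-m : ℤ) : ℝ) / ((n : ℤ) : ℝ) := by
      have hn' : (n : ℝ) ≠ 0 := Int.cast_ne_zero.mpr hn
      field_simp
      push_cast
      linarith
    have : Irrational (((-m : ℤ) : ℝ) / ((n : ℤ) : ℝ)) := hom ▸ hirr
    have : Irrational (((-m / n : ℚ) : ℝ)) := by
      convert this using 1
      push_cast
      ring
    exact (Rat.not_irrational _) this
lemma coe_two (D : ℕ) : ((2 : Oring D) : ℝ) = 2 := rfl

lemma int_dvd_iff_zmod (a : ℤ) : (2 : ℤ) ∣ a ↔ (a : ZMod 2) = 0 := by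
  rw [ZMod.intCast_zmod_eq_zero_iff_dvd]; norm_num

lemma two_dvd_iff (D : ℕ) (x : Oring D) :
    (2 : Oring D) ∣ x ↔ ∃ m n : ℤ, (x : ℝ) = 2 * (m : ℝ) + 2 * (n : ℝ) * om D := by
  constructor
  · rintro ⟨y, rfl⟩
    obtain ⟨m, n, hy⟩ := (mem_Oring_iff D (y : ℝ)).mp y.2
    refine ⟨m, n, ?_⟩
    push_cast [coe_two, hy]
    ring
  · rintro ⟨m, n, hx⟩
    refine ⟨⟨(m : ℝ) + (n : ℝ) * om D, (mem_Oring_iff D _).mpr ⟨m, n, rfl⟩⟩, ?_⟩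
    apply Subtype.ext
    push_cast [coe_two]
    rw [hx]
    ring

lemma zmod1 : ∀ m n p q : ZMod 2, m * p - 1 = 0 → m * q + n * p + n * q = 0 →
    m + p = 0 ∧ n + q = 0 := by decide

lemma zmod2 : ∀ m n p q d : ZMod 2, m * p + n * q * d - 1 = 0 → m * q + n * p = 0 →
    m + p = 0 ∧ n + q = 0 := by decide

lemma key (D : ℕ) (hD : 1 < D) (hsf : Squarefree D) (h8 : D % 8 ≠ 5)
    (u v : Oring D) (h : (2 : Oring D) ∣ (u * v - 1)) : (2 : Oring D) ∣ (u + v) := by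
  obtain ⟨m, n, hu⟩ := (mem_Oring_iff D (u : ℝ)).mp u.2
  obtain ⟨p, q, hv⟩ := (mem_Oring_iff D (v : ℝ)).mp v.2
  obtain ⟨a, b, hab⟩ := (two_dvd_iff D _).mp h
  push_cast at hab
  rw [hu, hv] at hab
  have main : (2 : ℤ) ∣ (m + p) ∧ (2 : ℤ) ∣ (n + q) := by
    by_cases h4 : D % 4 = 1
    · obtain ⟨j, hj⟩ : ∃ j : ℕ, D = 8 * j + 1 := ⟨D / 8, by omega⟩
      have hs : Real.sqrt D ^ 2 = (D : ℝ) := Real.sq_sqrt (by positivity)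
      have hsq : om D ^ 2 = 2 * (j : ℝ) + om D := by
        simp only [om, if_pos h4]
        have hDr : (D : ℝ) = 8 * (j : ℝ) + 1 := by exact_mod_cast congrArg (Nat.cast : ℕ → ℝ) hj
        nlinarith [hs, hDr]
      have h0 : ((m * p + 2 * j * n * q - 1 - 2 * a : ℤ) : ℝ)
          + ((m * q + n * p + n * q - 2 * b : ℤ) : ℝ) * om D = 0 := by
        push_cast
        linear_combination hab - (n : ℝ) * q * hsq
      obtain ⟨hX, hY⟩ := indep_om D hD hsf _ _ h0
      have hX2 : (2 : ℤ) ∣ (m * p - 1) := ⟨a - (j : ℤ) * n * q, by linarith⟩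
      have hY2 : (2 : ℤ) ∣ (m * q + n * p + n * q) := ⟨b, by linarith⟩
      rw [int_dvd_iff_zmod] at hX2 hY2
      push_cast at hX2 hY2
      have hz := zmod1 (m : ZMod 2) (n : ZMod 2) (p : ZMod 2) (q : ZMod 2)
        (by linear_combination hX2) (by linear_combination hY2)
      rw [int_dvd_iff_zmod, int_dvd_iff_zmod]
      push_cast
      exact hz
    · have hs : Real.sqrt D ^ 2 = (D : ℝ) := Real.sq_sqrt (by positivity)
      have hsq : om D ^ 2 = (D : ℝ) := by
        simp only [om, if_neg h4]
        linarith
      have h0 : ((m * p + n * q * D - 1 - 2 * a : ℤ) : ℝ)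
          + ((m * q + n * p - 2 * b : ℤ) : ℝ) * om D = 0 := by
        push_cast
        linear_combination hab - (n : ℝ) * q * hsq
      obtain ⟨hX, hY⟩ := indep_om D hD hsf _ _ h0
      have hX2 : (2 : ℤ) ∣ (m * p + n * q * D - 1) := ⟨a, by linarith⟩
      have hY2 : (2 : ℤ) ∣ (m * q + n * p) := ⟨b, by linarith⟩
      rw [int_dvd_iff_zmod] at hX2 hY2
      push_cast at hX2 hY2
      have hz := zmod2 (m : ZMod 2) (n : ZMod 2) (p : ZMod 2) (q : ZMod 2) (D : ZMod 2)
        (by linear_combination hX2) (by linear_combination hY2)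
      rw [int_dvd_iff_zmod, int_dvd_iff_zmod]
      push_cast
      exact hz
  obtain ⟨⟨a', ha'⟩, ⟨b', hb'⟩⟩ := main
  refine (two_dvd_iff D _).mpr ⟨a', b', ?_⟩
  push_cast
  rw [hu, hv]
  have ha'' : (m : ℝ) + p = 2 * a' := by exact_mod_cast congrArg (Int.cast : ℤ → ℝ) ha'
  have hb'' : (n : ℝ) + q = 2 * b' := by exact_mod_cast congrArg (Int.cast : ℤ → ℝ) hb'
  linear_combination ha'' + om D * hb''
/-- For `8 ∤ D - 5` and `C = S·T₁`, the conjugate `C⁻¹ Γ₀(2O) C` equals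
`Γ = {γ ∈ SL₂(O) : a+d ∈ 2O, b+c ∈ 2O}`. -/
theorem conj_Gamma0_eq (D : ℕ) (hD : 1 < D) (hsf : Squarefree D)
    (h8 : D % 8 ≠ 5) :
    (letI C : Matrix (Fin 2) (Fin 2) (Oring D) := !![0, 1; -1, 0] * !![1, 1; 0, 1]
    {B : Matrix (Fin 2) (Fin 2) (Oring D) |
      ∃ A : Matrix (Fin 2) (Fin 2) (Oring D),
        A.det = 1 ∧ (2 : Oring D) ∣ A 1 0 ∧ B = C⁻¹ * A * C})
    = {B : Matrix (Fin 2) (Fin 2) (Oring D) | B.det = 1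
        ∧ (2 : Oring D) ∣ (B 0 0 + B 1 1) ∧ (2 : Oring D) ∣ (B 0 1 + B 1 0)} := by

  have hC : (!![0, 1; -1, 0] * !![1, 1; 0, 1] : Matrix (Fin 2) (Fin 2) (Oring D))
      = !![0, 1; -1, -1] := by
    ext i j
    fin_cases i <;> fin_cases j <;>
      simp [Matrix.mul_apply, Matrix.vecMul, dotProduct, Fin.sum_univ_two]
  set C : Matrix (Fin 2) (Fin 2) (Oring D) := !![0, 1; -1, 0] * !![1, 1; 0, 1] with hCdef
  have hCC : C * !![-1, -1; 1, 0] = 1 := by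
    rw [hC]
    ext i j
    fin_cases i <;> fin_cases j <;>
      simp [Matrix.mul_apply, Matrix.vecMul, dotProduct, Fin.sum_univ_two,
        Matrix.one_apply]
  have hCC' : (!![-1, -1; 1, 0] : Matrix (Fin 2) (Fin 2) (Oring D)) * C = 1 := by
    rw [hC]
    ext i j
    fin_cases i <;> fin_cases j <;>
      simp [Matrix.mul_apply, Matrix.vecMul, dotProduct, Fin.sum_univ_two,
        Matrix.one_apply]
  have hCi : C⁻¹ = !![-1, -1; 1, 0] := Matrix.inv_eq_right_inv hCC
  have hdetC : C.det = 1 := by rw [hC, Matrix.det_fin_two_of]; ring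
  have hdetCi : (!![-1, -1; 1, 0] : Matrix (Fin 2) (Fin 2) (Oring D)).det = 1 := by
    rw [Matrix.det_fin_two_of]; ring
  ext B
  simp only [Set.mem_setOf_eq]
  constructor
  · rintro ⟨A, hdet, hc, rfl⟩
    rw [hCi]
    have hprod : !![(-1 : Oring D), -1; 1, 0] * A * C
        = !![A 0 1 + A 1 1, - A 0 0 - A 1 0 + A 0 1 + A 1 1; - A 0 1, A 0 0 - A 0 1] := by
      rw [hC]
      ext i j
      fin_cases i <;> fin_cases j <;>
        simp [Matrix.mul_apply, Matrix.vecMul, dotProduct, Fin.sum_univ_two] <;> ring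
    have hdet2 : A 0 0 * A 1 1 - A 0 1 * A 1 0 = 1 := by
      rw [Matrix.det_fin_two] at hdet; exact hdet
    have htr : (2 : Oring D) ∣ A 0 0 + A 1 1 := by
      apply key D hD hsf h8
      obtain ⟨k, hk⟩ := hc
      exact ⟨A 0 1 * k, by rw [hk] at hdet2; linear_combination hdet2⟩
    refine ⟨?_, ?_, ?_⟩
    · rw [Matrix.det_mul, Matrix.det_mul, hdetCi, hdet, hdetC]; ring
    · rw [hprod]
      show (2 : Oring D) ∣ (A 0 1 + A 1 1) + (A 0 0 - A 0 1)
      have heq : (A 0 1 + A 1 1) + (A 0 0 - A 0 1) = A 0 0 + A 1 1 := by ring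
      rw [heq]; exact htr
    · rw [hprod]
      show (2 : Oring D) ∣ (- A 0 0 - A 1 0 + A 0 1 + A 1 1) + (- A 0 1)
      obtain ⟨k, hk⟩ := htr
      obtain ⟨l, hl⟩ := hc
      exact ⟨k - A 0 0 - l, by rw [← sub_eq_zero]; linear_combination hk - hl⟩
  · rintro ⟨hdet, h1, h2⟩
    have hprod : C * B * !![(-1 : Oring D), -1; 1, 0]
        = !![- B 1 0 + B 1 1, - B 1 0;
             B 0 0 - B 0 1 + B 1 0 - B 1 1, B 0 0 + B 1 0] := by
      rw [hC]
      ext i j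
      fin_cases i <;> fin_cases j <;>
        simp [Matrix.mul_apply, Matrix.vecMul, dotProduct, Fin.sum_univ_two] <;> ring
    refine ⟨C * B * !![-1, -1; 1, 0], ?_, ?_, ?_⟩
    · rw [Matrix.det_mul, Matrix.det_mul, hdetC, hdet, hdetCi]; ring
    · rw [hprod]
      show (2 : Oring D) ∣ B 0 0 - B 0 1 + B 1 0 - B 1 1
      obtain ⟨k, hk⟩ := h1
      obtain ⟨l, hl⟩ := h2
      exact ⟨k + l - B 0 1 - B 1 1, by rw [← sub_eq_zero]; linear_combination hk + hl⟩
    · rw [hCi]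
      have hassoc : (!![-1, -1; 1, 0] : Matrix (Fin 2) (Fin 2) (Oring D))
            * (C * B * !![-1, -1; 1, 0]) * C
          = (!![-1, -1; 1, 0] * C) * B * (!![-1, -1; 1, 0] * C) := by
        simp only [Matrix.mul_assoc]
      rw [hassoc, hCC', Matrix.one_mul, Matrix.mul_one]
end

section
/- Let Γ_O be the full Hilbert modular group PSL₂(O) of Q(√D) and Γ the subgroup of classes of matrices [[a,b],[c,d]] ∈ SL₂(O) with a+d, b+c ∈ 2O, modulo ±Id. Then the index [Γ_O : Γ] equals 6 if D ≢ 1 mod 4, equals 9 if D ≡ 1 mod 8, and equals 15 if D ≡ 5 mod 8; equivalently [Γ_O : Γ] = 6 - 3χ(2) + 6χ(4) where χ is the Kronecker symbol mod Δ. -/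
abbrev Z2 := ZMod 2
def qmul (q x y : Z2 × Z2) : Z2 × Z2 :=
  (x.1 * y.1 + q.2 * (x.2 * y.2), x.1 * y.2 + x.2 * y.1 + q.1 * (x.2 * y.2))
def Quad (_q : Z2 × Z2) : Type := Z2 × Z2
instance (q) : DecidableEq (Quad q) := inferInstanceAs (DecidableEq (Z2 × Z2))
instance (q) : Fintype (Quad q) := inferInstanceAs (Fintype (Z2 × Z2))
instance (q) : CommRing (Quad q) :=
  { (inferInstance : AddCommGroup (Z2 × Z2)) with
    mul := qmul q
    one := ((1 : Z2), (0 : Z2))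
    mul_assoc := fun x y z => (by decide : ∀ q x y z, qmul q (qmul q x y) z = qmul q x (qmul q y z)) q x y z
    one_mul := fun x => (by decide : ∀ q x, qmul q ((1:Z2),(0:Z2)) x = x) q x
    mul_one := fun x => (by decide : ∀ q x, qmul q x ((1:Z2),(0:Z2)) = x) q x
    left_distrib := fun x y z => (by decide : ∀ q x y z, qmul q x (y + z) = qmul q x y + qmul q x z) q x y z
    right_distrib := fun x y z => (by decide : ∀ q x y z, qmul q (x + y) z = qmul q x z + qmul q y z) q x y z
    zero_mul := fun x => (by decide : ∀ q x, qmul q 0 x = 0) q x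
    mul_zero := fun x => (by decide : ∀ q x, qmul q x 0 = 0) q x
    mul_comm := fun x y => (by decide : ∀ q x y, qmul q x y = qmul q y x) q x y }

lemma quad_add_eq_zero_iff (q) (u v : Quad q) : u + v = 0 ↔ u = v :=
  (by decide : ∀ u v : Z2 × Z2, u + v = 0 ↔ u = v) u v

section param
variable {D : ℕ} {θ : ℝ} {b c : ℤ}

lemma uniq (hirr : Irrational θ) (a₁ b₁ a₂ b₂ : ℤ)
    (h : (a₁ : ℝ) + b₁ * θ = a₂ + b₂ * θ) : a₁ = a₂ ∧ b₁ = b₂ := by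
  have hb : b₁ = b₂ := by
    by_contra hne
    have hbne : ((b₁ : ℝ) - b₂) ≠ 0 := by
      have : ((b₁ : ℝ)) ≠ (b₂ : ℝ) := by exact_mod_cast hne
      exact sub_ne_zero.mpr this
    exact hirr ⟨((a₂ - a₁ : ℤ) : ℚ) / ((b₁ - b₂ : ℤ) : ℚ), by
      push_cast
      field_simp
      linarith⟩
  refine ⟨?_, hb⟩
  subst hb
  have : (a₁ : ℝ) = a₂ := by linarith
  exact_mod_cast this

variable (hθ2 : θ ^ 2 = b * θ + c) (hirr : Irrational θ)
  (hO : Oring D = Subring.closure {θ})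

include hθ2 in
lemma rep_of_mem (x : ℝ) (hx : x ∈ Subring.closure {θ}) :
    ∃ a bb : ℤ, x = a + bb * θ := by
  induction hx using Subring.closure_induction with
  | mem y hy =>
      rw [Set.mem_singleton_iff] at hy
      exact ⟨0, 1, by simp [hy]⟩
  | zero => exact ⟨0, 0, by simp⟩
  | one => exact ⟨1, 0, by simp⟩
  | add x y hx hy ihx ihy =>
      obtain ⟨a₁, b₁, h₁⟩ := ihx; obtain ⟨a₂, b₂, h₂⟩ := ihy
      exact ⟨a₁ + a₂, b₁ + b₂, by push_cast; linarith⟩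
  | neg x hx ihx =>
      obtain ⟨a₁, b₁, h₁⟩ := ihx
      exact ⟨-a₁, -b₁, by push_cast; linarith⟩
  | mul x y hx hy ihx ihy =>
      obtain ⟨a₁, b₁, h₁⟩ := ihx; obtain ⟨a₂, b₂, h₂⟩ := ihy
      refine ⟨a₁ * a₂ + c * (b₁ * b₂), a₁ * b₂ + b₁ * a₂ + b * (b₁ * b₂), ?_⟩
      rw [h₁, h₂]
      push_cast
      linear_combination (b₁ * b₂ : ℝ) * hθ2

include hθ2 hO in
lemma hrep_all : ∀ x : Oring D, ∃ a bb : ℤ, (x : ℝ) = a + bb * θ :=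
  fun x => rep_of_mem hθ2 x.1 (hO ▸ x.2)

include hO in
lemma mem_of_rep (a bb : ℤ) : (a : ℝ) + bb * θ ∈ Oring D := by
  rw [hO]
  exact add_mem (intCast_mem _ a)
    (mul_mem (intCast_mem _ bb) (Subring.subset_closure rfl))


noncomputable def piFun (q : Z2 × Z2) (H : ∀ x : Oring D, ∃ a bb : ℤ, (x : ℝ) = a + bb * θ)
    (x : Oring D) : Quad q :=
  ((((H x).choose : ℤ) : Z2), (((H x).choose_spec.choose : ℤ) : Z2))

include hirr in
lemma piFun_eq (q : Z2 × Z2) (H : ∀ x : Oring D, ∃ a bb : ℤ, (x : ℝ) = a + bb * θ)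
    (x : Oring D) (a bb : ℤ) (hx : (x : ℝ) = a + bb * θ) :
    piFun q H x = ((a : Z2), (bb : Z2)) := by
  obtain ⟨h1, h2⟩ := uniq hirr (H x).choose (H x).choose_spec.choose a bb
    (((H x).choose_spec.choose_spec).symm.trans hx)
  unfold piFun
  exact congrArg₂ (fun m n : ℤ => ((m : Z2), (n : Z2))) h1 h2

end param

section param2
variable {D : ℕ} {θ : ℝ} {b c : ℤ}

noncomputable def piHom (hθ2 : θ ^ 2 = b * θ + c) (hirr : Irrational θ)
    (q : Z2 × Z2) (H : ∀ x : Oring D, ∃ a bb : ℤ, (x : ℝ) = a + bb * θ)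
    (hq : q = ((b : Z2), (c : Z2))) : Oring D →+* Quad q where
  toFun := piFun q H
  map_one' := by
    rw [piFun_eq hirr q H 1 1 0 (by push_cast; ring)]
    show (((1:ℤ) : Z2), ((0:ℤ) : Z2)) = ((1 : Z2), (0 : Z2))
    norm_num
  map_zero' := by
    show piFun q H 0 = 0
    rw [piFun_eq hirr q H 0 0 0 (by push_cast; ring)]
    show (((0:ℤ) : Z2), ((0:ℤ) : Z2)) = ((0 : Z2), (0 : Z2))
    norm_num
  map_mul' x y := by
    show piFun q H (x * y) = piFun q H x * piFun q H y
    obtain ⟨a₁, b₁, h₁⟩ := H x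
    obtain ⟨a₂, b₂, h₂⟩ := H y
    have hxy : ((x * y : Oring D) : ℝ) =
        ((a₁ * a₂ + c * (b₁ * b₂) : ℤ) : ℝ) + ((a₁ * b₂ + b₁ * a₂ + b * (b₁ * b₂) : ℤ) : ℝ) * θ := by
      push_cast
      rw [h₁, h₂]
      linear_combination (b₁ * b₂ : ℝ) * hθ2
    rw [piFun_eq hirr q H _ _ _ hxy, piFun_eq hirr q H x a₁ b₁ h₁, piFun_eq hirr q H y a₂ b₂ h₂]
    show _ = qmul q _ _
    subst hq
    unfold qmul
    refine Prod.ext ?_ ?_ <;> push_cast <;> ring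
  map_add' x y := by
    show piFun q H (x + y) = piFun q H x + piFun q H y
    obtain ⟨a₁, b₁, h₁⟩ := H x
    obtain ⟨a₂, b₂, h₂⟩ := H y
    have hxy : ((x + y : Oring D) : ℝ) = ((a₁ + a₂ : ℤ) : ℝ) + ((b₁ + b₂ : ℤ) : ℝ) * θ := by
      push_cast; rw [h₁, h₂]; ring
    rw [piFun_eq hirr q H _ _ _ hxy, piFun_eq hirr q H x a₁ b₁ h₁, piFun_eq hirr q H y a₂ b₂ h₂]
    have hadd : ((((a₁ : Z2), (b₁ : Z2)) : Quad q) + (((a₂ : Z2), (b₂ : Z2)) : Quad q))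
        = ((((a₁ : Z2) + (a₂ : Z2)), ((b₁ : Z2) + (b₂ : Z2))) : Quad q) := rfl
    refine Eq.trans ?_ hadd.symm
    refine Prod.ext ?_ ?_ <;> push_cast <;> ring

lemma piHom_ker (hθ2 : θ ^ 2 = b * θ + c) (hirr : Irrational θ)
    (hO : Oring D = Subring.closure {θ})
    (q : Z2 × Z2) (H : ∀ x : Oring D, ∃ a bb : ℤ, (x : ℝ) = a + bb * θ)
    (hq : q = ((b : Z2), (c : Z2))) (x : Oring D) :
    piHom hθ2 hirr q H hq x = 0 ↔ (2 : Oring D) ∣ x := by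
  obtain ⟨a, bb, hx⟩ := H x
  have hpi : piHom hθ2 hirr q H hq x = ((a : Z2), (bb : Z2)) := piFun_eq hirr q H x a bb hx
  rw [hpi]
  constructor
  · intro h0
    have h0' : ((a : Z2), (bb : Z2)) = (((0:Z2)), ((0:Z2))) := h0
    have ha : (2 : ℤ) ∣ a := by
      have := congrArg Prod.fst h0'
      simpa using (ZMod.intCast_zmod_eq_zero_iff_dvd a 2).mp this
    have hb : (2 : ℤ) ∣ bb := by
      have := congrArg Prod.snd h0'
      simpa using (ZMod.intCast_zmod_eq_zero_iff_dvd bb 2).mp this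
    obtain ⟨a', ha'⟩ := ha
    obtain ⟨b', hb'⟩ := hb
    refine ⟨⟨(a' : ℝ) + b' * θ, mem_of_rep hO a' b'⟩, ?_⟩
    apply Subtype.ext
    have h2O : ((2 : Oring D) : ℝ) = 2 := rfl
    push_cast [h2O]
    rw [hx, ha', hb']
    push_cast
    ring
  · rintro ⟨y, hy⟩
    obtain ⟨a₂, b₂, h₂⟩ := H y
    have hx2 : (x : ℝ) = ((2 * a₂ : ℤ) : ℝ) + ((2 * b₂ : ℤ) : ℝ) * θ := by
      have h2O : ((2 : Oring D) : ℝ) = 2 := rfl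
      rw [hy]
      push_cast [h2O]
      rw [h₂]
      ring
    have h3 : ((a : Z2), (bb : Z2)) = (((2 * a₂ : ℤ) : Z2), ((2 * b₂ : ℤ) : Z2)) :=
      hpi.symm.trans (piFun_eq hirr q H x (2 * a₂) (2 * b₂) hx2)
    rw [h3]
    have e1 : ((2 * a₂ : ℤ) : Z2) = 0 := by
      rw [ZMod.intCast_zmod_eq_zero_iff_dvd]; exact ⟨a₂, by norm_num⟩
    have e2 : ((2 * b₂ : ℤ) : Z2) = 0 := by
      rw [ZMod.intCast_zmod_eq_zero_iff_dvd]; exact ⟨b₂, by norm_num⟩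
    rw [e1, e2]
    rfl

lemma piHom_surj (hθ2 : θ ^ 2 = b * θ + c) (hirr : Irrational θ)
    (hO : Oring D = Subring.closure {θ})
    (q : Z2 × Z2) (H : ∀ x : Oring D, ∃ a bb : ℤ, (x : ℝ) = a + bb * θ)
    (hq : q = ((b : Z2), (c : Z2))) :
    Function.Surjective (piHom hθ2 hirr q H hq) := by
  intro w
  rcases (show ∃ u v : Z2, w = ((u : Z2), (v : Z2)) from ⟨w.1, w.2, rfl⟩) with ⟨u, v, rfl⟩
  refine ⟨⟨((u.val : ℤ) : ℝ) + ((v.val : ℤ) : ℝ) * θ, mem_of_rep hO _ _⟩, ?_⟩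
  have := piFun_eq hirr q H ⟨((u.val : ℤ) : ℝ) + ((v.val : ℤ) : ℝ) * θ, mem_of_rep hO _ _⟩
    (u.val : ℤ) (v.val : ℤ) rfl
  show piFun q H _ = _
  rw [this]
  have hu : (((u.val : ℤ)) : Z2) = u := (by decide : ∀ u : Z2, (((u.val : ℤ)) : Z2) = u) u
  have hv : (((v.val : ℤ)) : Z2) = v := (by decide : ∀ v : Z2, (((v.val : ℤ)) : Z2) = v) v
  rw [hu, hv]

end param2

open Matrix

set_option maxRecDepth 100000

def Hsub (q : Z2 × Z2) : Subgroup (Matrix.SpecialLinearGroup (Fin 2) (Quad q)) where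
  carrier := {A | A.1 0 0 = A.1 1 1 ∧ A.1 0 1 = A.1 1 0}
  one_mem' := by constructor <;> simp
  mul_mem' := by
    rintro A B ⟨ha1, ha2⟩ ⟨hb1, hb2⟩
    constructor <;>
      simp only [Matrix.SpecialLinearGroup.coe_mul, Matrix.mul_apply, Fin.sum_univ_two,
        ha1, ha2, hb1, hb2] <;> ring
  inv_mem' := by
    rintro A ⟨ha1, ha2⟩
    rw [Matrix.SpecialLinearGroup.SL2_inv_expl A]
    constructor <;> simp [ha1, ha2]

instance (q) : DecidablePred (· ∈ Hsub q) :=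
  fun A => inferInstanceAs (Decidable (A.1 0 0 = A.1 1 1 ∧ A.1 0 1 = A.1 1 0))

lemma mem_Hsub (q) (A : Matrix.SpecialLinearGroup (Fin 2) (Quad q)) :
    A ∈ Hsub q ↔ (A.1 0 0 = A.1 1 1 ∧ A.1 0 1 = A.1 1 0) := Iff.rfl

lemma cardH (q : Z2 × Z2) :
    Nat.card (Hsub q) = if q.1 = 0 then 8 else 4 := by
  rw [Nat.card_eq_fintype_card]
  revert q; decide

lemma cardG (q : Z2 × Z2) :
    Nat.card (Matrix.SpecialLinearGroup (Fin 2) (Quad q)) =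
      if q.1 = 0 then 48 else if q.2 = 0 then 36 else 60 := by
  rw [Nat.card_eq_fintype_card]
  revert q; decide

lemma indexH (q : Z2 × Z2) :
    (Hsub q).index = if q.1 = 0 then 6 else if q.2 = 0 then 9 else 15 := by
  have h := Subgroup.index_mul_card (Hsub q)
  rw [cardH, cardG] at h
  rcases Decidable.eq_or_ne q.1 0 with h1 | h1 <;> rcases Decidable.eq_or_ne q.2 0 with h2 | h2 <;>
    simp [h1, h2] at h ⊢ <;> omega

lemma decompose (q : Z2 × Z2) (A : Matrix (Fin 2) (Fin 2) (Quad q))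
    (hA : A 0 0 * A 1 1 - A 0 1 * A 1 0 = 1) :
    ∃ p : Quad q × Quad q × Quad q × Quad q,
      !![1, p.1; 0, 1] * !![1, 0; p.2.1, 1] * !![1, p.2.2.1; 0, 1] * !![1, 0; p.2.2.2, 1] = A := by
  have key : ∀ (q : Z2 × Z2) (a b c d : Quad q), a * d - b * c = 1 →
      ∃ x y z t : Quad q,
        (1 + x*y) + ((1 + x*y)*z + x)*t = a ∧ (1 + x*y)*z + x = b ∧
        y + (y*z + 1)*t = c ∧ y*z + 1 = d := by decide
  obtain ⟨x, y, z, t, h1, h2, h3, h4⟩ := key q (A 0 0) (A 0 1) (A 1 0) (A 1 1) hA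
  refine ⟨⟨x, y, z, t⟩, ?_⟩
  ext i j
  fin_cases i <;> fin_cases j <;>
    simp [Matrix.mul_apply, Fin.sum_univ_two] <;>
    first | exact h1 | exact h2 | exact h3 | exact h4

theorem main_param {D : ℕ} {θ : ℝ} {b c : ℤ}
    (hθ2 : θ ^ 2 = b * θ + c) (hirr : Irrational θ)
    (hO : Oring D = Subring.closure {θ})
    (M : Subgroup (Matrix.SpecialLinearGroup (Fin 2) (Oring D)))
    (hM : ∀ A : Matrix.SpecialLinearGroup (Fin 2) (Oring D),
      A ∈ M ↔ ((2 : Oring D) ∣ (A 0 0 + A 1 1) ∧ (2 : Oring D) ∣ (A 0 1 + A 1 0))) :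
    (M.map (QuotientGroup.mk'
        (Subgroup.center (Matrix.SpecialLinearGroup (Fin 2) (Oring D))))).index
      = if (b : Z2) = 0 then 6 else if (c : Z2) = 0 then 9 else 15 := by
  have H := hrep_all hθ2 hO
  set q : Z2 × Z2 := ((b : Z2), (c : Z2)) with hq
  let π : Oring D →+* Quad q := piHom hθ2 hirr q H hq
  let Φ := Matrix.SpecialLinearGroup.map (n := Fin 2) π
  have hent : ∀ (A : Matrix.SpecialLinearGroup (Fin 2) (Oring D)) (i j : Fin 2),
      ((Φ A) : Matrix (Fin 2) (Fin 2) (Quad q)) i j = π (A.1 i j) := fun A i j => rfl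
  -- the center is contained in M
  have hcenter : Subgroup.center (Matrix.SpecialLinearGroup (Fin 2) (Oring D)) ≤ M := by
    intro A hA
    obtain ⟨r, _, hsc⟩ := Matrix.SpecialLinearGroup.mem_center_iff.mp hA
    have e00 : A.1 0 0 = r := by rw [← hsc]; simp
    have e11 : A.1 1 1 = r := by rw [← hsc]; simp
    have e01 : A.1 0 1 = 0 := by rw [← hsc]; simp [Matrix.scalar_apply]
    have e10 : A.1 1 0 = 0 := by rw [← hsc]; simp [Matrix.scalar_apply]
    rw [hM]
    constructor
    · exact ⟨r, by show A.1 0 0 + A.1 1 1 = 2 * r; rw [e00, e11]; ring⟩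
    · exact ⟨0, by show A.1 0 1 + A.1 1 0 = 2 * 0; rw [e01, e10]; ring⟩
  -- Φ is surjective
  have hsurj : Function.Surjective Φ := by
    intro A
    have hdet : A.1 0 0 * A.1 1 1 - A.1 0 1 * A.1 1 0 = 1 := by
      have h2 := A.2
      rwa [Matrix.det_fin_two] at h2
    obtain ⟨⟨x, y, z, t⟩, hp⟩ := decompose q A.1 hdet
    obtain ⟨x', hx'⟩ := piHom_surj hθ2 hirr hO q H hq x
    obtain ⟨y', hy'⟩ := piHom_surj hθ2 hirr hO q H hq y
    obtain ⟨z', hz'⟩ := piHom_surj hθ2 hirr hO q H hq z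
    obtain ⟨t', ht'⟩ := piHom_surj hθ2 hirr hO q H hq t
    have hdetU : ∀ r : Oring D, Matrix.det !![(1 : Oring D), r; 0, 1] = 1 := fun r => by
      simp [Matrix.det_fin_two_of]
    have hdetL : ∀ r : Oring D, Matrix.det !![(1 : Oring D), 0; r, 1] = 1 := fun r => by
      simp [Matrix.det_fin_two_of]
    have hU : ∀ r : Oring D,
        ((Φ ⟨!![1, r; 0, 1], hdetU r⟩ : Matrix.SpecialLinearGroup (Fin 2) (Quad q)) :
          Matrix (Fin 2) (Fin 2) (Quad q)) = !![1, π r; 0, 1] := by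
      intro r
      ext i j
      fin_cases i <;> fin_cases j <;> erw [hent] <;> simp
    have hL : ∀ r : Oring D,
        ((Φ ⟨!![1, 0; r, 1], hdetL r⟩ : Matrix.SpecialLinearGroup (Fin 2) (Quad q)) :
          Matrix (Fin 2) (Fin 2) (Quad q)) = !![1, 0; π r, 1] := by
      intro r
      ext i j
      fin_cases i <;> fin_cases j <;> erw [hent] <;> simp
    refine ⟨⟨!![1, x'; 0, 1], hdetU x'⟩ * ⟨!![1, 0; y', 1], hdetL y'⟩ *
      ⟨!![1, z'; 0, 1], hdetU z'⟩ * ⟨!![1, 0; t', 1], hdetL t'⟩, ?_⟩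
    apply Subtype.ext
    have hx'' : π x' = x := hx'
    have hy'' : π y' = y := hy'
    have hz'' : π z' = z := hz'
    have ht'' : π t' = t := ht'
    erw [_root_.map_mul, _root_.map_mul, _root_.map_mul, Matrix.SpecialLinearGroup.coe_mul,
      Matrix.SpecialLinearGroup.coe_mul, Matrix.SpecialLinearGroup.coe_mul,
      hU x', hL y', hU z', hL t', hx'', hy'', hz'', ht'']
    exact hp
  -- M is the preimage of Hsub q
  have hMc : M = (Hsub q).comap Φ := by
    ext A
    rw [hM, Subgroup.mem_comap, mem_Hsub]
    have h1 := (piHom_ker hθ2 hirr hO q H hq (A 0 0 + A 1 1)).symm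
    have h2 := (piHom_ker hθ2 hirr hO q H hq (A 0 1 + A 1 0)).symm
    rw [map_add, quad_add_eq_zero_iff] at h1 h2
    rw [h1, h2, hent A 0 0, hent A 1 1, hent A 0 1, hent A 1 0]
  rw [Subgroup.index_map_eq M (QuotientGroup.mk'_surjective _)
    (by rw [QuotientGroup.ker_mk']; exact hcenter)]
  rw [hMc, Subgroup.index_comap, MonoidHom.range_eq_top_of_surjective Φ hsurj,
    Subgroup.relIndex_top_right, indexH q]

/-- The index in the full Hilbert modular group `Γ_O = PSL₂(O)` of the image of
`M = {γ ∈ SL₂(O) : a+d ∈ 2O, b+c ∈ 2O}` equals `6` if `D ≢ 1 (mod 4)`,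
`9` if `D ≡ 1 (mod 8)` and `15` if `D ≡ 5 (mod 8)`. -/
theorem index_Gamma (D : ℕ) (hD : 1 < D) (hsf : Squarefree D)
    (M : Subgroup (Matrix.SpecialLinearGroup (Fin 2) (Oring D)))
    (hM : ∀ A : Matrix.SpecialLinearGroup (Fin 2) (Oring D),
      A ∈ M ↔ ((2 : Oring D) ∣ (A 0 0 + A 1 1) ∧ (2 : Oring D) ∣ (A 0 1 + A 1 0))) :
    (M.map (QuotientGroup.mk'
        (Subgroup.center (Matrix.SpecialLinearGroup (Fin 2) (Oring D))))).index
      = if D % 4 ≠ 1 then 6 else if D % 8 = 1 then 9 else 15 := by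
  have hDsq : ¬ IsSquare (D : ℕ) := by
    rintro ⟨r, hr⟩
    have hu : IsUnit r := hsf r ⟨1, by rw [hr, mul_one]⟩
    rw [Nat.isUnit_iff] at hu
    rw [hu, mul_one] at hr
    omega
  have hirrD : Irrational (Real.sqrt D) := irrational_sqrt_natCast_iff.mpr hDsq
  have hsq : Real.sqrt D ^ 2 = (D : ℝ) := Real.sq_sqrt (by positivity)
  by_cases h4 : D % 4 = 1
  · have hO : Oring D = Subring.closure {(1 + Real.sqrt D) / 2} := by
      rw [Oring, if_pos h4]
    have hirr : Irrational ((1 + Real.sqrt D) / 2) := by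
      rintro ⟨r, hr⟩
      exact hirrD ⟨2 * r - 1, by push_cast; linarith [hr]⟩
    have h41 : ((D - 1) / 4) * 4 = D - 1 := by omega
    have hcR : ((((D - 1) / 4 : ℕ) : ℤ) : ℝ) = ((D : ℝ) - 1) / 4 := by
      have h2 := congrArg (fun n : ℕ => (n : ℝ)) h41
      push_cast at h2
      rw [Nat.cast_sub (by omega : 1 ≤ D), Nat.cast_one] at h2
      rw [Int.cast_natCast]
      linarith [h2]
    have hθ2 : ((1 + Real.sqrt D) / 2) ^ 2 =
        ((1 : ℤ) : ℝ) * ((1 + Real.sqrt D) / 2) + ((((D - 1) / 4 : ℕ) : ℤ) : ℝ) := by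
      rw [hcR]
      push_cast
      linear_combination (1/4 : ℝ) * hsq
    rw [main_param hθ2 hirr hO M hM]
    rw [if_neg (by decide : ¬((1 : ℤ) : Z2) = 0)]
    have hc0 : ((((( D - 1) / 4 : ℕ) : ℤ)) : Z2) = 0 ↔ D % 8 = 1 := by
      rw [show (((((D - 1) / 4 : ℕ) : ℤ)) : Z2) = (((D - 1) / 4 : ℕ) : Z2) from by push_cast; rfl]
      rw [ZMod.natCast_eq_zero_iff]
      omega
    by_cases h8 : D % 8 = 1
    · rw [if_pos (hc0.mpr h8)]
      simp [h4, h8]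
    · rw [if_neg (fun h => h8 (hc0.mp h))]
      simp [h4, h8]
  · have hO : Oring D = Subring.closure {Real.sqrt D} := by
      rw [Oring, if_neg h4]
    have hθ2 : (Real.sqrt D) ^ 2 = ((0 : ℤ) : ℝ) * Real.sqrt D + (((D : ℕ) : ℤ) : ℝ) := by
      push_cast
      rw [hsq]
      ring
    rw [main_param hθ2 hirrD hO M hM]
    rw [if_pos (by decide : ((0 : ℤ) : Z2) = 0), if_pos (by simpa using h4)]
end
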